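/- For every integer m ≥ 1 and every integer k ≥ 1, the k-color Ramsey number of C_{2m+1} satisfies r_k(C_{2m+1}) ≥ m·2^k + 1. -/

import Mathlib

open SimpleGraph

/-- `H` is contained in `G` as a subgraph (there is an injective adjacency-preserving map). -/
def ContainsCopy {α β : Type*} (H : SimpleGraph α) (G : SimpleGraph β) : Prop :=
  ∃ f : α ↪ β, ∀ u v, H.Adj u v → G.Adj (f u) (f v)

/-- The `k`-edge-coloring `c` of the complete graph on `Fin N` contains a monochromatic copy of `H`. -/
def HasMonoCopy {α : Type*} (H : SimpleGraph α) {N k : ℕ}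
    (c : Sym2 (Fin N) → Fin k) : Prop :=
  ∃ i : Fin k, ∃ f : α ↪ Fin N, ∀ u v, H.Adj u v → c s(f u, f v) = i

/-- The multicolor Ramsey number `r_k(H)`: the least `N` such that every `k`-coloring of the
edges of `K_N` contains a monochromatic copy of `H`. -/
noncomputable def multiRamsey {α : Type*} (H : SimpleGraph α) (k : ℕ) : ℕ :=
  sInf {N | ∀ c : Sym2 (Fin N) → Fin k, HasMonoCopy H c}

/-- The graph on `Fin N` formed by the edges of color `i`. -/
def colorGraph {N k : ℕ} (c : Sym2 (Fin N) → Fin k) (i : Fin k) : SimpleGraph (Fin N) where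
  Adj u v := u ≠ v ∧ c s(u, v) = i
  symm := by
    constructor
    intro u v h
    exact ⟨h.1.symm, by rw [Sym2.eq_swap]; exact h.2⟩
  loopless := ⟨fun u h => h.1 rfl⟩

/-- The independence number of a graph. -/
noncomputable def indepNum {V : Type*} (G : SimpleGraph V) : ℕ :=
  sSup {n | ∃ s : Finset V, s.card = n ∧ ∀ u ∈ s, ∀ v ∈ s, ¬ G.Adj u v}

/-! ### Auxiliary material -/

namespace BondyErdosAux

/-- Recursion for the greedy Ramsey bound. -/
def F (k : ℕ) : ℕ → ℕ
  | 0 => 1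
  | t + 1 => k * F k t + 1

lemma greedy {N k : ℕ} (hk : 0 < k) (c : Sym2 (Fin N) → Fin k) :
    ∀ (t : ℕ) (S : Finset (Fin N)), F k t ≤ S.card →
    ∃ (v : Fin t → Fin N) (col : Fin t → Fin k),
      Function.Injective v ∧ (∀ a, v a ∈ S) ∧
      ∀ a b : Fin t, a < b → c s(v a, v b) = col a := by
  intro t
  induction t with
  | zero =>
    intro S _
    exact ⟨Fin.elim0, Fin.elim0, fun a => a.elim0, fun a => a.elim0, fun a => a.elim0⟩
  | succ t ih =>
    intro S hS
    have hScard : 0 < S.card := by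
      have h0 : 0 < F k (t + 1) := by simp [F]
      omega
    obtain ⟨v0, hv0⟩ := Finset.card_pos.mp hScard
    set S' := S.erase v0 with hS'
    have hS'card : k * F k t ≤ S'.card := by
      rw [hS', Finset.card_erase_of_mem hv0]
      simp only [F] at hS
      omega
    haveI : Nonempty (Fin k) := ⟨⟨0, hk⟩⟩
    obtain ⟨i, _, hi⟩ := Finset.exists_le_card_fiber_of_mul_le_card_of_maps_to
      (s := S') (t := (Finset.univ : Finset (Fin k))) (f := fun x => c s(v0, x))
      (fun a _ => Finset.mem_univ _) Finset.univ_nonempty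
      (by simpa using hS'card)
    set T := S'.filter (fun x => c s(v0, x) = i) with hT
    obtain ⟨v', col', hinj', hmem', hcol'⟩ := ih T hi
    refine ⟨Fin.cons v0 v', Fin.cons i col', ?_, ?_, ?_⟩
    · rw [Fin.cons_injective_iff]
      constructor
      · rintro ⟨a, ha⟩
        have h1 : v' a ∈ T := hmem' a
        have h2 : v' a ∈ S' := Finset.mem_of_mem_filter _ h1
        exact Finset.ne_of_mem_erase h2 ha
      · exact hinj'
    · intro a
      rcases Fin.eq_zero_or_eq_succ a with rfl | ⟨a', rfl⟩
      · simpa using hv0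
      · have h2 : v' a' ∈ S' := Finset.mem_of_mem_filter _ (hmem' a')
        simpa using Finset.mem_of_mem_erase h2
    · intro a b hab
      rcases Fin.eq_zero_or_eq_succ a with rfl | ⟨a', rfl⟩
      · rcases Fin.eq_zero_or_eq_succ b with rfl | ⟨b', rfl⟩
        · exact absurd hab (lt_irrefl _)
        · have h1 : v' b' ∈ T := hmem' b'
          have := (Finset.mem_filter.mp h1).2
          simpa using this
      · rcases Fin.eq_zero_or_eq_succ b with rfl | ⟨b', rfl⟩
        · simp [Fin.lt_def] at hab
        · have h3 : a' < b' := by exact Fin.succ_lt_succ_iff.mp hab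
          simpa using hcol' a' b' h3

lemma ramsey_exists (m k : ℕ) (hk : 0 < k) :
    ∀ c : Sym2 (Fin (F k (k * (2 * m) + 1))) → Fin k,
      HasMonoCopy (cycleGraph (2 * m + 1)) c := by
  intro c
  obtain ⟨v, col, hinj, -, hcol⟩ := greedy hk c (k * (2 * m) + 1) Finset.univ (by simp)
  obtain ⟨i, -, hi⟩ := Finset.exists_lt_card_fiber_of_mul_lt_card_of_maps_to
    (s := (Finset.univ : Finset (Fin (k * (2 * m) + 1))))
    (t := (Finset.univ : Finset (Fin k))) (f := col) (n := 2 * m)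
    (fun a _ => Finset.mem_univ _) (by simp)
  set B := Finset.univ.filter (fun x => col x = i) with hB
  obtain ⟨B', hB'sub, hB'card⟩ := Finset.exists_subset_card_eq (Nat.succ_le_of_lt hi)
  let e := (Finset.equivFinOfCardEq hB'card).symm
  have hecol : ∀ j, col (e j : Fin (k * (2 * m) + 1)) = i := by
    intro j
    have h1 : ((e j : {x // x ∈ B'}) : Fin (k * (2 * m) + 1)) ∈ B' := (e j).2
    have h2 := hB'sub h1
    simpa [hB] using h2
  refine ⟨i, ⟨fun j => v (e j), ?_⟩, ?_⟩
  · intro a b hab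
    have h1 := hinj hab
    exact (Equiv.apply_eq_iff_eq e).mp (Subtype.ext h1)
  · intro u w hadj
    have hne : (e u : Fin (k * (2 * m) + 1)) ≠ (e w : Fin (k * (2 * m) + 1)) := by
      intro h
      exact hadj.ne ((Equiv.apply_eq_iff_eq e).mp (Subtype.ext h))
    show c s(v (e u), v (e w)) = i
    rcases lt_or_gt_of_ne hne with h | h
    · rw [hcol _ _ h]; exact hecol u
    · rw [Sym2.eq_swap, hcol _ _ h]; exact hecol w

/-- The Bondy–Erdős coloring. -/
def preColor (m k : ℕ) (hk : 0 < k) (u v : Fin (m * 2 ^ k)) : Fin k :=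
  ⟨Nat.log 2 ((u.val / m) ^^^ (v.val / m)) % k, Nat.mod_lt _ hk⟩

def badc (m k : ℕ) (hk : 0 < k) : Sym2 (Fin (m * 2 ^ k)) → Fin k :=
  Sym2.lift ⟨fun u v => preColor m k hk u v, fun u v => by simp [preColor, Nat.xor_comm]⟩

lemma xor_lt_two_div_two {x y : ℕ} (h : x ^^^ y < 2) : x / 2 = y / 2 := by
  apply Nat.eq_of_testBit_eq
  intro j
  have hlt : x ^^^ y < 2 ^ (j + 1) := lt_of_lt_of_le h (by
    calc (2 : ℕ) = 2 ^ 1 := (pow_one 2).symm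
    _ ≤ 2 ^ (j + 1) := Nat.pow_le_pow_right (by norm_num) (by omega))
  have h1 : (x ^^^ y).testBit (j + 1) = false := Nat.testBit_lt_two_pow hlt
  rw [Nat.testBit_xor] at h1
  have h2 : x.testBit (j + 1) = y.testBit (j + 1) := by
    cases hx : x.testBit (j + 1) <;> cases hy : y.testBit (j + 1) <;> simp_all
  rw [← Nat.testBit_succ, ← Nat.testBit_succ]
  exact h2

lemma testBit_of_log {d : ℕ} (hd : d ≠ 0) : d.testBit (Nat.log 2 d) = true := by
  set L := Nat.log 2 d
  have h1 : 2 ^ L ≤ d := Nat.pow_log_le_self 2 hd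
  have h2 : d < 2 ^ (L + 1) := Nat.lt_pow_succ_log_self (by norm_num) d
  have hp : 0 < 2 ^ L := pow_pos (by norm_num) _
  have h3 : d / 2 ^ L = 1 := by
    have ha : d / 2 ^ L < 2 := (Nat.div_lt_iff_lt_mul hp).mpr (by rw [pow_succ] at h2; omega)
    have hb : 1 ≤ d / 2 ^ L := (Nat.le_div_iff_mul_le hp).mpr (by omega)
    omega
  rw [Nat.testBit_eq_decide_div_mod_eq, h3]
  norm_num

lemma no_mono (m k : ℕ) (hm : 1 ≤ m) (hk : 0 < k) :
    ¬ HasMonoCopy (cycleGraph (2 * m + 1)) (badc m k hk) := by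
  rintro ⟨i, f, hf⟩
  have hbv : ∀ x : Fin (m * 2 ^ k), x.val / m < 2 ^ k := by
    intro x
    rw [Nat.div_lt_iff_lt_mul (by omega)]
    calc (x : ℕ) < m * 2 ^ k := x.isLt
    _ = 2 ^ k * m := mul_comm _ _
  have hlog : ∀ u v : Fin (2 * m + 1), (cycleGraph (2 * m + 1)).Adj u v →
      Nat.log 2 (((f u).val / m) ^^^ ((f v).val / m)) = i.val := by
    intro u v h
    have h1 := hf u v h
    have h3 : Nat.log 2 (((f u).val / m) ^^^ ((f v).val / m)) % k = i.val := by
      have h2 : preColor m k hk (f u) (f v) = i := by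
        simpa [badc] using h1
      simpa [preColor, Fin.ext_iff] using h2
    have h4 : Nat.log 2 (((f u).val / m) ^^^ ((f v).val / m)) < k := by
      rcases eq_or_ne (((f u).val / m) ^^^ ((f v).val / m)) 0 with h | h
      · rw [h]; simpa using hk
      · exact Nat.log_lt_of_lt_pow h (Nat.xor_lt_two_pow (hbv _) (hbv _))
    rw [Nat.mod_eq_of_lt h4] at h3
    exact h3
  have hadj_succ : ∀ (j : ℕ) (hj : j + 1 < 2 * m + 1),
      (cycleGraph (2 * m + 1)).Adj ⟨j, by omega⟩ ⟨j + 1, hj⟩ := by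
    intro j hj
    rw [cycleGraph_adj']
    right
    rw [Fin.sub_def]
    simp only []
    have h1 : 2 * m + 1 - j + (j + 1) = (2 * m + 1) + 1 := by omega
    rw [h1, Nat.add_mod_left]
    exact Nat.mod_eq_of_lt (by omega)
  have hadj_last : (cycleGraph (2 * m + 1)).Adj ⟨2 * m, by omega⟩ ⟨0, by omega⟩ := by
    rw [cycleGraph_adj']
    right
    rw [Fin.sub_def]
    simp only []
    have h1 : 2 * m + 1 - 2 * m + 0 = 1 := by omega
    rw [h1]
    exact Nat.mod_eq_of_lt (by omega)
  rcases Nat.eq_zero_or_pos i.val with hi0 | hipos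
  · -- color 0 : components of size 2m
    have key : ∀ u v, (cycleGraph (2 * m + 1)).Adj u v →
        (f u).val / (2 * m) = (f v).val / (2 * m) := by
      intro u v h
      have h1 := hlog u v h
      rw [hi0] at h1
      have h2 : ((f u).val / m) ^^^ ((f v).val / m) < 2 := by
        rcases Nat.log_eq_zero_iff.mp h1 with h | h
        · exact h
        · omega
      have h3 := xor_lt_two_div_two h2
      rw [Nat.div_div_eq_div_mul, Nat.div_div_eq_div_mul, mul_comm m 2] at h3
      exact h3
    have hconst : ∀ (j : ℕ) (hj : j < 2 * m + 1),
        (f ⟨j, hj⟩).val / (2 * m) = (f ⟨0, by omega⟩).val / (2 * m) := by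
      intro j
      induction j with
      | zero => intro hj; rfl
      | succ j ih =>
        intro hj
        have h1 := key _ _ (hadj_succ j hj)
        rw [← h1]
        exact ih (by omega)
    classical
    set T := Finset.univ.filter
      (fun x : Fin (m * 2 ^ k) => x.val / (2 * m) = (f ⟨0, by omega⟩).val / (2 * m)) with hT
    have hmemT : ∀ j : Fin (2 * m + 1), f j ∈ T := by
      intro j
      have h1 := hconst j.val j.isLt
      simp only [hT, Finset.mem_filter, Finset.mem_univ, true_and]
      simpa using h1
    have h1 : 2 * m + 1 ≤ T.card := by
      have := Finset.card_le_card_of_injOn (s := Finset.univ) (t := T)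
        (fun j : Fin (2 * m + 1) => f j) (fun a _ => hmemT a) (f.injective.injOn)
      simpa using this
    have h2 : T.card ≤ 2 * m := by
      have hmaps : ∀ x ∈ T, (x : ℕ) ∈
          Finset.Ico (2 * m * ((f ⟨0, by omega⟩).val / (2 * m)))
            (2 * m * ((f ⟨0, by omega⟩).val / (2 * m)) + 2 * m) := by
        intro x hx
        simp only [hT, Finset.mem_filter, Finset.mem_univ, true_and] at hx
        have hdm := Nat.div_add_mod x.val (2 * m)
        have hmod : x.val % (2 * m) < 2 * m := Nat.mod_lt _ (by omega)
        rw [hx] at hdm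
        simp only [Finset.mem_Ico]
        omega
      have := Finset.card_le_card_of_injOn (fun x : Fin (m * 2 ^ k) => (x : ℕ))
        hmaps (Fin.val_injective.injOn)
      simpa using this
    omega
  · -- positive color : bipartite
    have key : ∀ u v, (cycleGraph (2 * m + 1)).Adj u v →
        Nat.testBit ((f u).val / m) i.val ≠ Nat.testBit ((f v).val / m) i.val := by
      intro u v h
      have h1 := hlog u v h
      have hd0 : ((f u).val / m) ^^^ ((f v).val / m) ≠ 0 := by
        intro h0
        rw [h0] at h1
        simp at h1
        omega
      have h2 : (((f u).val / m) ^^^ ((f v).val / m)).testBit i.val = true := by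
        rw [← h1]
        exact testBit_of_log hd0
      rw [Nat.testBit_xor] at h2
      intro heq
      rw [heq] at h2
      simp at h2
    have hstep : ∀ (j : ℕ) (hj : j + 1 < 2 * m + 1),
        Nat.testBit ((f ⟨j + 1, hj⟩).val / m) i.val
          = ! Nat.testBit ((f ⟨j, by omega⟩).val / m) i.val := by
      intro j hj
      have h1 := key _ _ (hadj_succ j hj)
      cases hx : Nat.testBit ((f ⟨j, by omega⟩).val / m) i.val <;>
        cases hy : Nat.testBit ((f ⟨j + 1, hj⟩).val / m) i.val <;> simp_all
    have hpar : ∀ (j : ℕ) (hj : j < 2 * m + 1),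
        Nat.testBit ((f ⟨j, hj⟩).val / m) i.val
          = xor (Nat.testBit ((f ⟨0, by omega⟩).val / m) i.val) (decide (j % 2 = 1)) := by
      intro j
      induction j with
      | zero => intro hj; simp
      | succ j ih =>
        intro hj
        rw [hstep j hj, ih (by omega)]
        rcases Nat.mod_two_eq_zero_or_one j with h2 | h2
        · have h3 : (j + 1) % 2 = 1 := by omega
          simp [h2, h3]
        · have h3 : (j + 1) % 2 = 0 := by omega
          simp [h2, h3]
    have hlastne := key _ _ hadj_last
    have h0 := hpar (2 * m) (by omega)
    have hmod : (2 * m) % 2 = 0 := by omega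
    rw [hmod] at h0
    simp at h0
    exact hlastne h0

end BondyErdosAux

theorem stmt3 (m k : ℕ) (hm : 1 ≤ m) (hk : 1 ≤ k) :
    m * 2 ^ k + 1 ≤ multiRamsey (cycleGraph (2 * m + 1)) k := by
  have hSne : {N | ∀ c : Sym2 (Fin N) → Fin k, HasMonoCopy (cycleGraph (2 * m + 1)) c}.Nonempty :=
    ⟨BondyErdosAux.F k (k * (2 * m) + 1), BondyErdosAux.ramsey_exists m k hk⟩
  apply le_csInf hSne
  intro n hn
  by_contra hlt
  push_neg at hlt
  have hle : n ≤ m * 2 ^ k := by omega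
  obtain ⟨i, f, hf⟩ := hn (fun s => BondyErdosAux.badc m k hk (s.map (Fin.castLE hle)))
  apply BondyErdosAux.no_mono m k hm hk
  refine ⟨i, f.trans (Fin.castLEEmb hle), ?_⟩
  intro u v h
  have h1 := hf u v h
  simpa [Sym2.map_pair_eq] using h1
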